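/- Let n ≥ 1, j ≥ 1, and s ∈ {0,…,n}. Then the single-agent update probabilities of (2j−1)-Majority and 2j-Majority coincide: q_{2j-1}(s) = q_{2j}(s), i.e., P(Bin(2j−1, s/n) ≥ j) = P(Bin(2j, s/n) ≥ j+1) + (1/2)·P(Bin(2j, s/n) = j); equivalently, the probability that an activated agent with opinion b adopts a, and the probability that an activated agent with opinion a adopts b, are the same in both processes. -/
import Mathlib


open MeasureTheory Finset
open scoped ENNReal NNReal

noncomputable section

/-- Probability mass function of a binomial random variable `Bin(m, p)` at `k`. -/
def binomPMF (m k : ℕ) (p : ℝ) : ℝ := (m.choose k : ℝ) * p ^ k * (1 - p) ^ (m - k)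

/-- Tail probability `P(Bin(m, p) ≥ j)`. -/
def binomTail (m j : ℕ) (p : ℝ) : ℝ := ∑ k ∈ Finset.Icc j m, binomPMF m k p

/-- Cumulative distribution function `P(Bin(m, p) ≤ j)`. -/
def binomCDF (m j : ℕ) (p : ℝ) : ℝ := ∑ k ∈ Finset.range (j + 1), binomPMF m k p

/-- `majProb n j s` is the sample-majority probability `q_j(s)`: the probability that an
agent sampling `j` agents uniformly at random with replacement (when `s` of the `n` agents
hold opinion `a`) adopts opinion `a` under majority with uniform tie-breaking.
For odd `j = 2m+1` this is `P(Bin(2m+1, s/n) ≥ m+1)`; for even `j = 2m` it is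
`P(Bin(2m, s/n) ≥ m+1) + (1/2)·P(Bin(2m, s/n) = m)`. -/
def majProb (n j s : ℕ) : ℝ :=
  binomTail j (j / 2 + 1) ((s : ℝ) / n) +
    if Even j then (1 / 2) * binomPMF j (j / 2) ((s : ℝ) / n) else 0

/-- One-step transition kernel of the sequential `j`-Majority process on states `{0, …, n}`:
from state `s`, move to `s+1` with probability `((n-s)/n)·q_j(s)`, to `s-1` with probability
`(s/n)·(1-q_j(s))`, and stay at `s` otherwise. -/
def seqKernel (n j : ℕ) (s u : ℕ) : ℝ :=
  if u = s + 1 then (((n : ℝ) - s) / n) * majProb n j s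
  else if u + 1 = s then ((s : ℝ) / n) * (1 - majProb n j s)
  else if u = s then
    1 - (((n : ℝ) - s) / n) * majProb n j s - ((s : ℝ) / n) * (1 - majProb n j s)
  else 0

/-- One-step transition kernel of the gossip `j`-Majority process on states `{0, …, n}`:
from state `s`, the next state is distributed as `Bin(n, q_j(s))`. -/
def gossipKernel (n j : ℕ) (s u : ℕ) : ℝ := binomPMF n u (majProb n j s)

/-- `kernelTail K n s d` is the mass that the kernel `K` places, from state `s`,
on the set `{d, d+1, …, n}`, i.e. `P(X_{t+1} ≥ d | X_t = s)`. -/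
def kernelTail (K : ℕ → ℕ → ℝ) (n s d : ℕ) : ℝ := ∑ u ∈ Finset.Icc d n, K s u

/-- `IsMarkovChain μ K x X` states that, under the probability measure `μ`, the process
`X` is a Markov chain with one-step transition kernel `K` started at `x`: `X 0 = x`
almost surely, and conditionally on any finite path the next state is distributed
according to `K` applied to the current state. -/
def IsMarkovChain {Ω : Type*} [MeasurableSpace Ω] (μ : Measure Ω)
    (K : ℕ → ℕ → ℝ) (x : ℕ) (X : ℕ → Ω → ℕ) : Prop :=
  IsProbabilityMeasure μ ∧
  (∀ t, Measurable (X t)) ∧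
  μ {ω | X 0 ω = x} = 1 ∧
  ∀ (t : ℕ) (p : ℕ → ℕ) (u : ℕ),
    μ ({ω | X (t + 1) ω = u} ∩ {ω | ∀ i ≤ t, X i ω = p i}) =
      ENNReal.ofReal (K (p t) u) * μ {ω | ∀ i ≤ t, X i ω = p i}

/-- The convergence (hitting) time: the first time `t` with `X t ∈ {0, n}`
(`⊤` if the process never reaches a consensus state). -/
def hitTime {Ω : Type*} (n : ℕ) (X : ℕ → Ω → ℕ) (ω : Ω) : ℕ∞ :=
  ⨅ (t : ℕ) (_ : X t ω = 0 ∨ X t ω = n), (t : ℕ∞)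

lemma binomPMF_pascal (m k : ℕ) (hk : k ≤ m) (p : ℝ) :
    binomPMF (m + 1) (k + 1) p = p * binomPMF m k p + (1 - p) * binomPMF m (k + 1) p := by
  rcases eq_or_lt_of_le hk with rfl | hlt
  · unfold binomPMF
    have h0 : k - (k + 1) = 0 := by omega
    simp only [Nat.choose_succ_self, Nat.sub_self, h0, Nat.choose_self, pow_zero,
      Nat.cast_zero, Nat.cast_one]
    ring
  · unfold binomPMF
    have h1 : m + 1 - (k + 1) = (m - (k + 1)) + 1 := by omega
    have h2 : m - k = (m - (k + 1)) + 1 := by omega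
    rw [h1, h2, Nat.choose_succ_succ]
    push_cast
    ring

lemma binomPMF_centerSym (j : ℕ) (hj : 1 ≤ j) (p : ℝ) :
    p * binomPMF (2 * j - 1) (j - 1) p = (1 - p) * binomPMF (2 * j - 1) j p := by
  obtain ⟨i, rfl⟩ : ∃ i, j = i + 1 := ⟨j - 1, by omega⟩
  have h1 : 2 * (i + 1) - 1 = 2 * i + 1 := by omega
  have h2 : i + 1 - 1 = i := by omega
  unfold binomPMF
  rw [h1, h2]
  have hc : (2 * i + 1).choose i = (2 * i + 1).choose (i + 1) := by
    have := Nat.choose_symm (show i + 1 ≤ 2 * i + 1 by omega)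
    simpa [show 2 * i + 1 - (i + 1) = i by omega] using this
  have h3 : 2 * i + 1 - i = i + 1 := by omega
  have h4 : 2 * i + 1 - (i + 1) = i := by omega
  rw [hc, h3, h4]
  ring

lemma binomTail_succ (m j : ℕ) (hj : j ≤ m) (p : ℝ) :
    binomTail (m + 1) (j + 1) p = binomTail m j p - (1 - p) * binomPMF m j p := by
  unfold binomTail
  have hmap : Finset.Icc (j + 1) (m + 1) = (Finset.Icc j m).map (addRightEmbedding 1) := by
    rw [Finset.map_add_right_Icc]
  rw [hmap, Finset.sum_map]
  simp only [addRightEmbedding_apply]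
  rw [Finset.sum_congr rfl fun k hk => binomPMF_pascal m k (Finset.mem_Icc.mp hk).2 p]
  rw [Finset.sum_add_distrib, ← Finset.mul_sum, ← Finset.mul_sum]
  have hshift : ∑ k ∈ Finset.Icc j m, binomPMF m (k + 1) p
      = ∑ k ∈ Finset.Icc j m, binomPMF m k p - binomPMF m j p := by
    have h1 : ∑ k ∈ Finset.Icc j m, binomPMF m (k + 1) p
        = ∑ k ∈ Finset.Icc (j + 1) (m + 1), binomPMF m k p := by
      rw [hmap, Finset.sum_map]
      simp only [addRightEmbedding_apply]
    have h2 : ∑ k ∈ Finset.Icc (j + 1) (m + 1), binomPMF m k p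
        = ∑ k ∈ Finset.Icc (j + 1) m, binomPMF m k p + binomPMF m (m + 1) p := by
      exact Finset.sum_Icc_succ_top (by omega) _
    have h3 : binomPMF m (m + 1) p = 0 := by
      unfold binomPMF
      rw [Nat.choose_succ_self]
      push_cast
      ring
    have h4 : ∑ k ∈ Finset.Icc j m, binomPMF m k p
        = binomPMF m j p + ∑ k ∈ Finset.Icc (j + 1) m, binomPMF m k p := by
      rw [Finset.Icc_eq_cons_Ioc hj, Finset.sum_cons, Finset.Icc_add_one_left_eq_Ioc]
    rw [h1, h2, h3, h4]
    ring
  rw [hshift]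
  ring

theorem stmt10 (n j s : ℕ) (hn : 1 ≤ n) (hj : 1 ≤ j) (hs : s ≤ n) :
    majProb n (2 * j - 1) s = majProb n (2 * j) s := by
  obtain ⟨i, rfl⟩ : ∃ i, j = i + 1 := ⟨j - 1, by omega⟩
  have hodd : ¬ Even (2 * (i + 1) - 1) := by
    rw [Nat.even_sub (by omega)]
    simp [Nat.even_mul]
  have heven : Even (2 * (i + 1)) := even_two_mul _
  have hd1 : (2 * (i + 1) - 1) / 2 + 1 = i + 1 := by omega
  have hd2 : 2 * (i + 1) / 2 = i + 1 := by omega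
  unfold majProb
  set p : ℝ := (s : ℝ) / n with hp
  rw [if_neg hodd, if_pos heven, hd1, hd2]
  have ht := binomTail_succ (2 * (i + 1) - 1) (i + 1) (by omega) p
  have hpas := binomPMF_pascal (2 * (i + 1) - 1) i (by omega) p
  rw [show 2 * (i + 1) - 1 + 1 = 2 * (i + 1) by omega] at ht hpas
  rw [ht, hpas]
  have hsym := binomPMF_centerSym (i + 1) (by omega) p
  rw [show i + 1 - 1 = i by omega] at hsym
  linarith
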